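/- Every extreme point of the polytope of optimal solutions of the linear program max 1^T y subject to y ∈ cone{z_1,…,z_m} and y ≤ x is integer valued, where the z_j are the half-incidence vectors of the edges of a graph S possibly with self-loops and x ∈ ℕ^q. -/

import Mathlib

open Finset

lemma exists_pos_min (s : Finset ℝ) (hs : ∀ r ∈ s, 0 < r) :
    ∃ ε : ℝ, 0 < ε ∧ ∀ r ∈ s, ε ≤ r := by
  have hne : (insert (1:ℝ) s).Nonempty := ⟨1, Finset.mem_insert_self _ _⟩
  refine ⟨(insert (1:ℝ) s).min' hne, ?_,
    fun r hr => Finset.min'_le _ _ (Finset.mem_insert_of_mem hr)⟩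
  have hmem := Finset.min'_mem (insert (1:ℝ) s) hne
  rcases Finset.mem_insert.mp hmem with h | h
  · rw [h]; norm_num
  · exact hs _ h

inductive Reach {q m : ℕ} (ep : Fin m → Fin q × Fin q) (P : Fin m → Prop) (i0 : Fin q) :
    Bool → Fin q → Prop
  | base : Reach ep P i0 false i0
  | fwd {b : Bool} {e : Fin m} : Reach ep P i0 b (ep e).1 → P e → Reach ep P i0 (!b) (ep e).2
  | bwd {b : Bool} {e : Fin m} : Reach ep P i0 b (ep e).2 → P e → Reach ep P i0 (!b) (ep e).1

lemma reach_closed {q m : ℕ} {ep : Fin m → Fin q × Fin q} {P : Fin m → Prop} {i0 : Fin q}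
    {b : Bool} {j : Fin q} (h : Reach ep P i0 b j) :
    ∀ {b' : Bool}, Reach ep P i0 b' j → Reach ep P i0 (b ^^ b') i0 := by
  induction h with
  | base => intro b' h'; simpa using h'
  | @fwd b e h hP ih =>
      intro b' h'
      cases b <;> cases b' <;> simpa using ih (Reach.bwd h' hP)
  | @bwd b e h hP ih =>
      intro b' h'
      cases b <;> cases b' <;> simpa using ih (Reach.fwd h' hP)

lemma reach_rep {q m : ℕ} {ep : Fin m → Fin q × Fin q} {P : Fin m → Prop} {i0 : Fin q}
    {b : Bool} {j : Fin q} (h : Reach ep P i0 b j) :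
    ∃ c : Fin m → ℝ, (∀ e, c e ≠ 0 → P e) ∧ ∀ i : Fin q,
      (∑ e, ((if (ep e).1 = i then (1:ℝ) else 0) + (if (ep e).2 = i then (1:ℝ) else 0)) / 2 * c e)
        = ((if i0 = i then (1:ℝ) else 0)
            + (if b then (1:ℝ) else -1) * (if j = i then (1:ℝ) else 0)) / 2 := by
  classical
  induction h with
  | base =>
      refine ⟨0, by simp, fun i => ?_⟩
      by_cases h : i0 = i <;> simp [h]
  | @fwd b e h hP ih =>
      obtain ⟨c, hc, hsum⟩ := ih
      refine ⟨fun f => c f + (if f = e then (if b then (-1:ℝ) else 1) else 0), ?_, ?_⟩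
      · intro f hf
        by_cases hfe : f = e
        · subst hfe; exact hP
        · exact hc f (by simpa [hfe] using hf)
      · intro i
        have hexp : ∀ f : Fin m,
            ((if (ep f).1 = i then (1:ℝ) else 0) + (if (ep f).2 = i then (1:ℝ) else 0)) / 2
              * (c f + (if f = e then (if b then (-1:ℝ) else 1) else 0))
            = ((if (ep f).1 = i then (1:ℝ) else 0) + (if (ep f).2 = i then (1:ℝ) else 0)) / 2 * c f
              + (if f = e then
                  ((if (ep f).1 = i then (1:ℝ) else 0) + (if (ep f).2 = i then (1:ℝ) else 0)) / 2
                    * (if b then (-1:ℝ) else 1) else 0) := by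
          intro f
          by_cases hfe : f = e <;> cases b <;> simp [hfe] <;> ring
        rw [Finset.sum_congr rfl (fun f _ => hexp f), Finset.sum_add_distrib,
          Finset.sum_ite_eq' univ e, hsum i]
        simp only [mem_univ, if_true]
        cases b <;> by_cases h1 : (ep e).1 = i <;> by_cases h2 : (ep e).2 = i <;>
          by_cases h0 : i0 = i <;> simp [h1, h2, h0] <;> ring
  | @bwd b e h hP ih =>
      obtain ⟨c, hc, hsum⟩ := ih
      refine ⟨fun f => c f + (if f = e then (if b then (-1:ℝ) else 1) else 0), ?_, ?_⟩
      · intro f hf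
        by_cases hfe : f = e
        · subst hfe; exact hP
        · exact hc f (by simpa [hfe] using hf)
      · intro i
        have hexp : ∀ f : Fin m,
            ((if (ep f).1 = i then (1:ℝ) else 0) + (if (ep f).2 = i then (1:ℝ) else 0)) / 2
              * (c f + (if f = e then (if b then (-1:ℝ) else 1) else 0))
            = ((if (ep f).1 = i then (1:ℝ) else 0) + (if (ep f).2 = i then (1:ℝ) else 0)) / 2 * c f
              + (if f = e then
                  ((if (ep f).1 = i then (1:ℝ) else 0) + (if (ep f).2 = i then (1:ℝ) else 0)) / 2
                    * (if b then (-1:ℝ) else 1) else 0) := by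
          intro f
          by_cases hfe : f = e <;> cases b <;> simp [hfe] <;> ring
        rw [Finset.sum_congr rfl (fun f _ => hexp f), Finset.sum_add_distrib,
          Finset.sum_ite_eq' univ e, hsum i]
        simp only [mem_univ, if_true]
        cases b <;> by_cases h1 : (ep e).1 = i <;> by_cases h2 : (ep e).2 = i <;>
          by_cases h0 : i0 = i <;> simp [h1, h2, h0] <;> ring

/-- Every extreme point of the polytope of optimal solutions of the LP
`max 1ᵀy s.t. y ∈ cone{z_1,…,z_m}, y ≤ x` is integer valued, where the `z_j` are
the half-incidence vectors of the edges of a graph `S` possibly with self-loops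
and `x ∈ ℕ^q`. -/
theorem extreme_points_of_Yx_integral
    (q m : ℕ) (ep : Fin m → Fin q × Fin q) (x : Fin q → ℕ)
    (y : Fin q → ℝ)
    (hy : y ∈ Set.extremePoints ℝ
      {y : Fin q → ℝ |
        ((∃ a : Fin m → ℝ, (∀ e, 0 ≤ a e) ∧
            ∀ i, y i = ∑ e, ((if (ep e).1 = i then (1 : ℝ) else 0)
              + (if (ep e).2 = i then (1 : ℝ) else 0)) / 2 * a e) ∧
          ∀ i, y i ≤ (x i : ℝ)) ∧
        ∀ y' : Fin q → ℝ,
          (∃ a : Fin m → ℝ, (∀ e, 0 ≤ a e) ∧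
            ∀ i, y' i = ∑ e, ((if (ep e).1 = i then (1 : ℝ) else 0)
              + (if (ep e).2 = i then (1 : ℝ) else 0)) / 2 * a e) →
          (∀ i, y' i ≤ (x i : ℝ)) →
          ∑ i, y' i ≤ ∑ i, y i}) :
    ∀ i, ∃ n : ℤ, y i = (n : ℝ) := by
  classical
  obtain ⟨⟨⟨⟨a, ha0, harep⟩, hbox⟩, hopt⟩, hext⟩ := hy
  -- the key perturbation lemma
  have key : ∀ (c : Fin m → ℝ) (d : Fin q → ℝ),
      (∀ e, c e ≠ 0 → 0 < a e) →
      (∀ i, d i = ∑ e, ((if (ep e).1 = i then (1 : ℝ) else 0)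
              + (if (ep e).2 = i then (1 : ℝ) else 0)) / 2 * c e) →
      (∀ i, y i = (x i : ℝ) → d i = 0) →
      ∀ i, d i = 0 := by
    intro c d hc hd hT
    obtain ⟨ε, hε, hεle⟩ := exists_pos_min
      ((((univ : Finset (Fin m)).filter fun e => c e ≠ 0).image fun e => a e / |c e|) ∪
       (((univ : Finset (Fin q)).filter fun i => y i ≠ (x i:ℝ)).image
          fun i => ((x i:ℝ) - y i) / (|d i| + 1)))
      (by
        intro r hr
        rcases Finset.mem_union.mp hr with h | h
        · obtain ⟨e, he, rfl⟩ := Finset.mem_image.mp h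
          have hce : c e ≠ 0 := (Finset.mem_filter.mp he).2
          exact div_pos (hc e hce) (abs_pos.mpr hce)
        · obtain ⟨i, hi, rfl⟩ := Finset.mem_image.mp h
          have hne : y i ≠ (x i:ℝ) := (Finset.mem_filter.mp hi).2
          have : y i < (x i:ℝ) := lt_of_le_of_ne (hbox i) hne
          have h2 : (0:ℝ) < |d i| + 1 := by positivity
          exact div_pos (by linarith) h2)
    have hfeas : ∀ t : ℝ, |t| ≤ ε →
        ((∃ a' : Fin m → ℝ, (∀ e, 0 ≤ a' e) ∧
            ∀ i, y i + t * d i = ∑ e, ((if (ep e).1 = i then (1 : ℝ) else 0)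
              + (if (ep e).2 = i then (1 : ℝ) else 0)) / 2 * a' e)
          ∧ ∀ i, y i + t * d i ≤ (x i:ℝ)) := by
      intro t ht
      constructor
      · refine ⟨fun e => a e + t * c e, ?_, ?_⟩
        · intro e
          show (0:ℝ) ≤ a e + t * c e
          by_cases hce : c e = 0
          · simpa [hce] using ha0 e
          · have h1 : ε ≤ a e / |c e| :=
              hεle _ (Finset.mem_union_left _
                (Finset.mem_image_of_mem _ (Finset.mem_filter.mpr ⟨Finset.mem_univ _, hce⟩)))
            have h2 : (0:ℝ) < |c e| := abs_pos.mpr hce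
            have h3 : ε * |c e| ≤ a e := (le_div_iff₀ h2).mp h1
            have h4 : |t * c e| ≤ ε * |c e| := by
              rw [abs_mul]; exact mul_le_mul_of_nonneg_right ht (abs_nonneg _)
            have h5 := neg_abs_le (t * c e)
            linarith
        · intro i
          rw [harep i, hd i, Finset.mul_sum, ← Finset.sum_add_distrib]
          exact Finset.sum_congr rfl (fun e _ => by ring)
      · intro i
        by_cases hyi : y i = (x i:ℝ)
        · simp [hT i hyi, hyi]
        · have h1 : ε ≤ ((x i:ℝ) - y i)/(|d i| + 1) :=
            hεle _ (Finset.mem_union_right _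
              (Finset.mem_image_of_mem _ (Finset.mem_filter.mpr ⟨Finset.mem_univ _, hyi⟩)))
          have h2 : (0:ℝ) < |d i| + 1 := by positivity
          have h3 : ε * (|d i| + 1) ≤ (x i:ℝ) - y i := (le_div_iff₀ h2).mp h1
          have h4 : t * d i ≤ |t| * |d i| := by
            rw [← abs_mul]; exact le_abs_self _
          have h5 : |t| * |d i| ≤ ε * |d i| :=
            mul_le_mul_of_nonneg_right ht (abs_nonneg _)
          nlinarith [abs_nonneg (d i)]
    -- optimality forces the perturbation direction to have zero sum
    have hsum0 : ∑ i, d i = 0 := by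
      by_contra hs
      set t : ℝ := if 0 < ∑ i, d i then ε else -ε with htdef
      have habs : |t| ≤ ε := by
        rcases le_or_gt t 0 with h | h
        · rw [abs_of_nonpos h]; rw [htdef]; split <;> simp [le_of_lt hε]
        · rw [abs_of_pos h]; rw [htdef]; split <;> simp [le_of_lt hε] <;> linarith
      have hts : 0 < t * ∑ i, d i := by
        rcases lt_trichotomy (∑ i, d i) 0 with h | h | h
        · have : t = -ε := by rw [htdef]; split <;> [linarith; rfl]
          rw [this]; nlinarith
        · exact absurd h hs
        · have : t = ε := by rw [htdef]; split <;> [rfl; linarith]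
          rw [this]; nlinarith
      obtain ⟨⟨a', ha', hrep'⟩, hbox'⟩ := hfeas t habs
      have hle := hopt (fun i => y i + t * d i) ⟨a', ha', hrep'⟩ hbox'
      rw [Finset.sum_add_distrib, ← Finset.mul_sum] at hle
      linarith
    -- extremality forces the direction itself to be zero
    intro i
    obtain ⟨⟨a₁, ha₁, hrep₁⟩, hbox₁⟩ := hfeas (-ε) (by rw [abs_neg, abs_of_pos hε])
    obtain ⟨⟨a₂, ha₂, hrep₂⟩, hbox₂⟩ := hfeas ε (by rw [abs_of_pos hε])
    have hsame : ∀ t : ℝ, ∑ j, (y j + t * d j) = ∑ j, y j := by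
      intro t
      rw [Finset.sum_add_distrib, ← Finset.mul_sum, hsum0]
      ring
    have hm₁ : (fun j => y j + (-ε) * d j) ∈
        {y : Fin q → ℝ |
        ((∃ a : Fin m → ℝ, (∀ e, 0 ≤ a e) ∧
            ∀ i, y i = ∑ e, ((if (ep e).1 = i then (1 : ℝ) else 0)
              + (if (ep e).2 = i then (1 : ℝ) else 0)) / 2 * a e) ∧
          ∀ i, y i ≤ (x i : ℝ)) ∧
        ∀ y' : Fin q → ℝ,
          (∃ a : Fin m → ℝ, (∀ e, 0 ≤ a e) ∧
            ∀ i, y' i = ∑ e, ((if (ep e).1 = i then (1 : ℝ) else 0)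
              + (if (ep e).2 = i then (1 : ℝ) else 0)) / 2 * a e) →
          (∀ i, y' i ≤ (x i : ℝ)) →
          ∑ i, y' i ≤ ∑ i, y i} := by
      refine ⟨⟨⟨a₁, ha₁, hrep₁⟩, hbox₁⟩, ?_⟩
      intro y' hr hb
      calc ∑ j, y' j ≤ ∑ j, y j := hopt y' hr hb
        _ = ∑ j, (y j + (-ε) * d j) := (hsame (-ε)).symm
    have hm₂ : (fun j => y j + ε * d j) ∈
        {y : Fin q → ℝ |
        ((∃ a : Fin m → ℝ, (∀ e, 0 ≤ a e) ∧
            ∀ i, y i = ∑ e, ((if (ep e).1 = i then (1 : ℝ) else 0)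
              + (if (ep e).2 = i then (1 : ℝ) else 0)) / 2 * a e) ∧
          ∀ i, y i ≤ (x i : ℝ)) ∧
        ∀ y' : Fin q → ℝ,
          (∃ a : Fin m → ℝ, (∀ e, 0 ≤ a e) ∧
            ∀ i, y' i = ∑ e, ((if (ep e).1 = i then (1 : ℝ) else 0)
              + (if (ep e).2 = i then (1 : ℝ) else 0)) / 2 * a e) →
          (∀ i, y' i ≤ (x i : ℝ)) →
          ∑ i, y' i ≤ ∑ i, y i} := by
      refine ⟨⟨⟨a₂, ha₂, hrep₂⟩, hbox₂⟩, ?_⟩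
      intro y' hr hb
      calc ∑ j, y' j ≤ ∑ j, y j := hopt y' hr hb
        _ = ∑ j, (y j + ε * d j) := (hsame ε).symm
    have hseg : y ∈ openSegment ℝ (fun j => y j + (-ε) * d j) (fun j => y j + ε * d j) := by
      refine ⟨1/2, 1/2, by norm_num, by norm_num, by norm_num, ?_⟩
      funext j
      simp only [Pi.add_apply, Pi.smul_apply, smul_eq_mul]
      ring
    have h1 : (fun j => y j + (-ε) * d j) = y := hext hm₁ hm₂ hseg
    have h2 := congrFun h1 i
    have : ε * d i = 0 := by linarith
    rcases mul_eq_zero.mp this with h | h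
    · exact absurd h (ne_of_gt hε)
    · exact h
  -- main argument
  intro i0
  by_cases hti : y i0 = (x i0 : ℝ)
  · exact ⟨(x i0 : ℤ), by rw [hti]; push_cast; ring⟩
  have hlt : y i0 < (x i0 : ℝ) := lt_of_le_of_ne (hbox i0) hti
  set P : Fin m → Prop := fun e => 0 < a e with hP
  -- any reachable vertex (other than i0 for even walks) is tight
  have hreach_tight : ∀ (b : Bool) (j : Fin q), Reach ep P i0 b j → (b = true ∨ j ≠ i0) →
      y j = (x j : ℝ) := by
    intro b j hr hbj
    by_contra hne
    obtain ⟨c, hc, hcrep⟩ := reach_rep hr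
    have hd0 := key c (fun i =>
        ((if i0 = i then (1:ℝ) else 0)
          + (if b then (1:ℝ) else -1) * (if j = i then (1:ℝ) else 0)) / 2)
      hc (fun i => (hcrep i).symm) ?_ i0
    · have hne0 : ((if i0 = i0 then (1:ℝ) else 0)
          + (if b then (1:ℝ) else -1) * (if j = i0 then (1:ℝ) else 0)) / 2 ≠ 0 := by
        rcases hbj with hb | hj
        · subst hb
          by_cases hji : j = i0 <;> simp [hji] <;> norm_num
        · simp [hj]
      exact hne0 hd0
    · intro i hyi
      have hi1 : i0 ≠ i := fun h => hti (h ▸ hyi)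
      have hi2 : j ≠ i := fun h => hne (h ▸ hyi)
      simp [hi1, hi2]
  have hnoodd : ¬ Reach ep P i0 true i0 := fun h =>
    hti (hreach_tight true i0 h (Or.inl rfl))
  have hdisj : ∀ j, Reach ep P i0 false j → Reach ep P i0 true j → False := by
    intro j h1 h2
    exact hnoodd (by simpa using reach_closed h1 h2)
  set A : Finset (Fin q) := univ.filter (fun j => Reach ep P i0 false j) with hA
  set B : Finset (Fin q) := univ.filter (fun j => Reach ep P i0 true j) with hB
  -- balance equation on the reachable "bipartite" component
  have hg : ∀ j : Fin q,
      ((if Reach ep P i0 false j then (1:ℝ) else 0)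
        - (if Reach ep P i0 true j then (1:ℝ) else 0)) * y j
      = ∑ e, ((if Reach ep P i0 false j then (1:ℝ) else 0)
        - (if Reach ep P i0 true j then (1:ℝ) else 0))
          * (((if (ep e).1 = j then (1:ℝ) else 0)
              + (if (ep e).2 = j then (1:ℝ) else 0)) / 2 * a e) := by
    intro j
    rw [harep j, Finset.mul_sum]
  have hkey : ∑ j, ((if Reach ep P i0 false j then (1:ℝ) else 0)
        - (if Reach ep P i0 true j then (1:ℝ) else 0)) * y j = 0 := by
    rw [Finset.sum_congr rfl (fun j _ => hg j), Finset.sum_comm]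
    apply Finset.sum_eq_zero
    intro e _
    set g : Fin q → ℝ := fun j =>
      (if Reach ep P i0 false j then (1:ℝ) else 0)
        - (if Reach ep P i0 true j then (1:ℝ) else 0) with hgdef
    have hterm : ∀ j : Fin q,
        g j * (((if (ep e).1 = j then (1:ℝ) else 0)
              + (if (ep e).2 = j then (1:ℝ) else 0)) / 2 * a e)
        = (if (ep e).1 = j then g j * (a e / 2) else 0)
          + (if (ep e).2 = j then g j * (a e / 2) else 0) := by
      intro j
      split_ifs <;> ring
    rw [Finset.sum_congr rfl (fun j _ => hterm j), Finset.sum_add_distrib,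
      Finset.sum_ite_eq univ (ep e).1, Finset.sum_ite_eq univ (ep e).2]
    simp only [mem_univ, if_true]
    rcases (ha0 e).eq_or_lt with hz | hpos
    · rw [← hz]; ring
    · have hsum0 : g (ep e).1 + g (ep e).2 = 0 := by
        by_cases hu : Reach ep P i0 false (ep e).1
        · have hv : Reach ep P i0 true (ep e).2 := by simpa using Reach.fwd hu hpos
          have hu' : ¬ Reach ep P i0 true (ep e).1 := fun h => hdisj _ hu h
          have hv' : ¬ Reach ep P i0 false (ep e).2 := fun h => hdisj _ h hv
          simp [hgdef, hu, hv, hu', hv']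
        · by_cases hu2 : Reach ep P i0 true (ep e).1
          · have hv : Reach ep P i0 false (ep e).2 := by simpa using Reach.fwd hu2 hpos
            have hv' : ¬ Reach ep P i0 true (ep e).2 := fun h => hdisj _ hv h
            simp [hgdef, hu, hu2, hv, hv']
          · have hv1 : ¬ Reach ep P i0 false (ep e).2 := fun h =>
              hu2 (by simpa using Reach.bwd h hpos)
            have hv2 : ¬ Reach ep P i0 true (ep e).2 := fun h =>
              hu (by simpa using Reach.bwd h hpos)
            simp [hgdef, hu, hu2, hv1, hv2]
      have hfac : g (ep e).1 * (a e / 2) + g (ep e).2 * (a e / 2)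
          = (g (ep e).1 + g (ep e).2) * (a e / 2) := by ring
      rw [hfac, hsum0, zero_mul]
  have hbal : ∑ j ∈ A, y j = ∑ j ∈ B, y j := by
    have hAe : ∑ j ∈ A, y j = ∑ j, (if Reach ep P i0 false j then y j else 0) := by
      rw [hA, Finset.sum_filter]
    have hBe : ∑ j ∈ B, y j = ∑ j, (if Reach ep P i0 true j then y j else 0) := by
      rw [hB, Finset.sum_filter]
    have : ∑ j, (if Reach ep P i0 false j then y j else 0)
        - ∑ j, (if Reach ep P i0 true j then y j else 0)
        = ∑ j, ((if Reach ep P i0 false j then (1:ℝ) else 0)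
            - (if Reach ep P i0 true j then (1:ℝ) else 0)) * y j := by
      rw [← Finset.sum_sub_distrib]
      apply Finset.sum_congr rfl
      intro j _
      by_cases h1 : Reach ep P i0 false j <;> by_cases h2 : Reach ep P i0 true j <;>
        simp [h1, h2]
    rw [hAe, hBe]
    rw [hkey] at this
    linarith
  have hi0A : i0 ∈ A := by
    rw [hA]; exact Finset.mem_filter.mpr ⟨Finset.mem_univ _, Reach.base⟩
  have hsplit : ∑ j ∈ A, y j = y i0 + ∑ j ∈ A.erase i0, y j :=
    (Finset.add_sum_erase A y hi0A).symm
  have hAx : ∀ j ∈ A.erase i0, y j = (x j : ℝ) := by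
    intro j hj
    rw [Finset.mem_erase] at hj
    have hjA := Finset.mem_filter.mp (by rw [hA] at hj; exact hj.2)
    exact hreach_tight false j hjA.2 (Or.inr hj.1)
  have hBx : ∀ j ∈ B, y j = (x j : ℝ) := by
    intro j hj
    have hjB := Finset.mem_filter.mp (by rw [hB] at hj; exact hj)
    exact hreach_tight true j hjB.2 (Or.inl rfl)
  refine ⟨(∑ j ∈ B, (x j : ℤ)) - ∑ j ∈ A.erase i0, (x j : ℤ), ?_⟩
  have hy0 : y i0 = ∑ j ∈ B, y j - ∑ j ∈ A.erase i0, y j := by linarith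
  rw [hy0, Finset.sum_congr rfl hBx, Finset.sum_congr rfl hAx]
  push_cast
  ring
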